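/- Define f : R² → R⁵ by f(s,t) = (b(t)cosh s, sinh s, cosh s · cos t, cosh s · sin t, b(t)cosh s). Then ⟨f,f⟩ = 1 with respect to the index-2 form ⟨x,y⟩ = −x₁y₁ − x₂y₂ + x₃y₃ + x₄y₄ + x₅y₅, and the identity f_tt + cosh²(s)·f − sinh s cosh s · f_s = cosh s·(b''(t) + b(t))·(1,0,0,0,1) holds. -/

import Mathlib

/-- The metric of index 2 on `ℝ⁵`. -/
noncomputable def g5 (x y : Fin 5 → ℝ) : ℝ :=
  -(x 0 * y 0) - x 1 * y 1 + x 2 * y 2 + x 3 * y 3 + x 4 * y 4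

/-- The surface of Example 3.5 lies in `S⁴₂` and satisfies
`f_tt + cosh² s • f - (sinh s cosh s) • f_s = cosh s (b'' + b) • (1,0,0,0,1)`. -/
theorem stmt16 (b b₁ b₂ : ℝ → ℝ)
    (hb : ∀ t, HasDerivAt b (b₁ t) t)
    (hb₁ : ∀ t, HasDerivAt b₁ (b₂ t) t)
    (f : ℝ → ℝ → Fin 5 → ℝ)
    (hf : ∀ s t, f s t =
      ![b t * Real.cosh s, Real.sinh s, Real.cosh s * Real.cos t,
        Real.cosh s * Real.sin t, b t * Real.cosh s])
    (Fs Ft Ftt : ℝ → ℝ → Fin 5 → ℝ)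
    (hFs : ∀ s t, HasDerivAt (fun s' => f s' t) (Fs s t) s)
    (hFt : ∀ s t, HasDerivAt (fun t' => f s t') (Ft s t) t)
    (hFtt : ∀ s t, HasDerivAt (fun t' => Ft s t') (Ftt s t) t) :
    ∀ s t : ℝ,
      g5 (f s t) (f s t) = 1 ∧
      Ftt s t + (Real.cosh s) ^ 2 • f s t -
          (Real.sinh s * Real.cosh s) • Fs s t =
        (Real.cosh s * (b₂ t + b t)) • ![1, 0, 0, 0, 1] := by
  -- explicit derivatives
  have hFs' : ∀ s t, Fs s t =
      ![b t * Real.sinh s, Real.cosh s, Real.sinh s * Real.cos t,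
        Real.sinh s * Real.sin t, b t * Real.sinh s] := by
    intro s t
    refine (hFs s t).unique ?_
    have : (fun s' => f s' t) = fun s' =>
        ![b t * Real.cosh s', Real.sinh s', Real.cosh s' * Real.cos t,
          Real.cosh s' * Real.sin t, b t * Real.cosh s'] := by
      funext s'; exact hf s' t
    rw [this]
    rw [hasDerivAt_pi]
    intro i
    fin_cases i <;> simp <;>
    · first
      | exact (Real.hasDerivAt_cosh s).const_mul _
      | exact Real.hasDerivAt_sinh s
      | exact (Real.hasDerivAt_cosh s).mul_const _
  have hFt' : ∀ s t, Ft s t =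
      ![b₁ t * Real.cosh s, 0, -(Real.cosh s * Real.sin t),
        Real.cosh s * Real.cos t, b₁ t * Real.cosh s] := by
    intro s t
    refine (hFt s t).unique ?_
    have : (fun t' => f s t') = fun t' =>
        ![b t' * Real.cosh s, Real.sinh s, Real.cosh s * Real.cos t',
          Real.cosh s * Real.sin t', b t' * Real.cosh s] := by
      funext t'; exact hf s t'
    rw [this, hasDerivAt_pi]
    intro i
    fin_cases i <;> simp
    · exact (hb t).mul_const _
    · exact hasDerivAt_const _ _
    · simpa [mul_comm] using (Real.hasDerivAt_cos t).const_mul (Real.cosh s)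
    · simpa [mul_comm] using (Real.hasDerivAt_sin t).const_mul (Real.cosh s)
    · exact (hb t).mul_const _
  have hFtt' : ∀ s t, Ftt s t =
      ![b₂ t * Real.cosh s, 0, -(Real.cosh s * Real.cos t),
        -(Real.cosh s * Real.sin t), b₂ t * Real.cosh s] := by
    intro s t
    refine (hFtt s t).unique ?_
    have : (fun t' => Ft s t') = fun t' =>
        ![b₁ t' * Real.cosh s, 0, -(Real.cosh s * Real.sin t'),
          Real.cosh s * Real.cos t', b₁ t' * Real.cosh s] := by
      funext t'; exact hFt' s t'
    rw [this, hasDerivAt_pi]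
    intro i
    fin_cases i <;> simp
    · exact (hb₁ t).mul_const _
    · exact hasDerivAt_const _ _
    · simpa [mul_comm, Pi.neg_def] using ((Real.hasDerivAt_sin t).const_mul (Real.cosh s)).neg
    · simpa [mul_comm] using (Real.hasDerivAt_cos t).const_mul (Real.cosh s)
    · exact (hb₁ t).mul_const _
  intro s t
  have h1 : Real.cosh s ^ 2 - Real.sinh s ^ 2 = 1 := by
    rw [← Real.cosh_sq_sub_sinh_sq s]
  constructor
  · rw [hf s t]
    simp only [g5, Matrix.cons_val_zero, Matrix.cons_val_one, Matrix.head_cons,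
      Matrix.cons_val_two, Matrix.tail_cons, Matrix.cons_val_three, Matrix.cons_val_four]
    have h2 : Real.cos t ^ 2 + Real.sin t ^ 2 = 1 := by
      rw [← Real.sin_sq_add_cos_sq t]; ring
    nlinarith [h1, h2]
  · rw [hf s t, hFs' s t, hFtt' s t]
    funext i
    fin_cases i <;>
      simp [Pi.add_apply, Pi.sub_apply, Pi.smul_apply, smul_eq_mul]
    all_goals
      first
      | linear_combination (b t * Real.cosh s) * h1
      | linear_combination (-(b t * Real.cosh s)) * h1
      | linear_combination (Real.cosh s * Real.cos t) * h1
      | linear_combination (-(Real.cosh s * Real.cos t)) * h1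
      | linear_combination (Real.cosh s * Real.sin t) * h1
      | linear_combination (-(Real.cosh s * Real.sin t)) * h1
      | ring
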